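/- arXiv:1106.3063 — 2 statements merged into one kernel-verified Lean document; each statement's English description precedes it below -/
import Mathlib

section
/- For every even integer j ≥ 0, every even integer a ≥ 2, and every odd integer b ≥ 1, the rooted tree RT(0^j, a, b) is super edge-graceful. -/
/-- Edge type of the rooted tree `RT(a₀, …, a_{n-1})`: one edge from the root to each
child `i` (`Sum.inl i`), and one edge from child `i` to each of its `a i` leaf children
(`Sum.inr ⟨i, m⟩`).  The number of edges is `q = n + ∑ i, a i`. -/
abbrev RTEdge (n : ℕ) (a : Fin n → ℕ) := (Fin n) ⊕ (Σ i : Fin n, Fin (a i))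

/-- Vertex type of the rooted tree `RT(a₀, …, a_{n-1})`: the root (`none`), the children
`some (.inl i)` of the root, and the leaves `some (.inr ⟨i, m⟩)` attached to child `i`.
The number of vertices is `p = q + 1`. -/
abbrev RTVertex (n : ℕ) (a : Fin n → ℕ) := Option (RTEdge n a)

/-- The vertex labeling induced by an edge labeling `f`: each vertex gets the sum of the
labels of the edges incident with it. -/
def vertexSum {n : ℕ} (a : Fin n → ℕ) (f : RTEdge n a → ℤ) : RTVertex n a → ℤ
  | none => ∑ i : Fin n, f (Sum.inl i)
  | some (Sum.inl i) => f (Sum.inl i) + ∑ m : Fin (a i), f (Sum.inr ⟨i, m⟩)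
  | some (Sum.inr ⟨i, m⟩) => f (Sum.inr ⟨i, m⟩)

/-- The target label set for `q` objects: `{0, ±1, …, ±(q-1)/2}` if `q` is odd, and
`{±1, …, ±(q/2)}` if `q` is even. -/
noncomputable def segSet (q : ℕ) : Finset ℤ :=
  if q % 2 = 0 then (Finset.Icc (-((q / 2 : ℕ) : ℤ)) ((q / 2 : ℕ) : ℤ)).erase 0
  else Finset.Icc (-((q / 2 : ℕ) : ℤ)) ((q / 2 : ℕ) : ℤ)

/-- The rooted tree `RT(a₀, …, a_{n-1})` is super edge-graceful: there is an edge
labeling which is a bijection onto `{0, ±1, …, ±(q-1)/2}` (`q` odd) resp.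
`{±1, …, ±(q/2)}` (`q` even) whose induced vertex labeling is a bijection onto
`{0, ±1, …, ±(p-1)/2}` (`p` odd) resp. `{±1, …, ±(p/2)}` (`p` even), where
`q = n + ∑ i, a i` and `p = q + 1`. -/
def IsSEG {n : ℕ} (a : Fin n → ℕ) : Prop :=
  ∃ f : RTEdge n a → ℤ,
    Set.BijOn f Set.univ ↑(segSet (n + ∑ i, a i)) ∧
    Set.BijOn (vertexSum a f) Set.univ ↑(segSet (n + ∑ i, a i + 1))

/-- The sequence `(0^j, a, b)` of length `j + 2`. -/
def seq2 (j a b : ℕ) : Fin (j + 2) → ℕ :=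
  fun i => if (i : ℕ) < j then 0 else if (i : ℕ) = j then a else b

/- ======================= auxiliary development ======================= -/

/-- Labels of the edges from the root to the childless children: `±2, …, ±(j/2+1)`. -/
def zl (i : ℕ) : ℤ := if i % 2 = 0 then ((i / 2 : ℕ) : ℤ) + 2 else -(((i / 2 : ℕ) : ℤ) + 2)

/-- Labels of the leaf edges at the child with `a` leaves: `k, 1, ±(k-1), …, ±(k-(a-2)/2)`. -/
def al (k m : ℕ) : ℤ :=
  if m = 0 then (k : ℤ)
  else if m = 1 then 1
  else if m % 2 = 0 then (k : ℤ) - ((m / 2 : ℕ) : ℤ)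
  else -((k : ℤ) - ((m / 2 : ℕ) : ℤ))

/-- Labels of the leaf edges at the child with `b` leaves: `-1, ±(t+2), …, ±(t+1+(b-1)/2)`. -/
def bl (t m : ℕ) : ℤ :=
  if m = 0 then -1
  else if m % 2 = 1 then (t : ℤ) + 1 + (((m + 1) / 2 : ℕ) : ℤ)
  else -((t : ℤ) + 1 + ((m / 2 : ℕ) : ℤ))

/-- Labels of the edges from the root. -/
def el1 (j a b i : ℕ) : ℤ :=
  if i < j then zl i else if i = j then 0 else -(((j + a + b + 1) / 2 : ℕ) : ℤ)

/-- Labels of the leaf edges. -/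
def el2 (j a b i m : ℕ) : ℤ :=
  if i = j then al ((j + a + b + 1) / 2) m else bl (j / 2) m

/-- The edge labeling of `RT(0^j, a, b)`. -/
def elabel (j a b : ℕ) : RTEdge (j + 2) (seq2 j a b) → ℤ
  | .inl i => el1 j a b i.val
  | .inr ⟨i, m⟩ => el2 j a b i.val m.val

/-- The induced vertex labeling, in closed form. -/
def vlab (j a b : ℕ) : RTVertex (j + 2) (seq2 j a b) → ℤ
  | none => -(((j + a + b + 1) / 2 : ℕ) : ℤ)
  | some (.inl i) =>
      if (i : ℕ) < j then zl i.val
      else if (i : ℕ) = j then (((j + a + b + 1) / 2 : ℕ) : ℤ) + 1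
      else -((((j + a + b + 1) / 2 : ℕ) : ℤ) + 1)
  | some (.inr ⟨i, m⟩) => el2 j a b i.val m.val

lemma zl_sum (t : ℕ) : ∑ i ∈ Finset.range (2 * t), zl i = 0 := by
  induction t with
  | zero => simp
  | succ t ih =>
    rw [show 2 * (t + 1) = 2 * t + 1 + 1 by ring, Finset.sum_range_succ,
      Finset.sum_range_succ, ih]
    simp only [zl]
    split_ifs <;> first | omega | simp_all

lemma al_sum (k c : ℕ) : ∑ m ∈ Finset.range (2 * c + 2), al k m = (k : ℤ) + 1 := by
  induction c with
  | zero =>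
    rw [show 2 * 0 + 2 = 0 + 1 + 1 by ring, Finset.sum_range_succ, Finset.sum_range_succ,
      Finset.sum_range_zero]
    simp only [al]
    split_ifs <;> first | omega | simp_all
  | succ c ih =>
    rw [show 2 * (c + 1) + 2 = (2 * c + 2) + 1 + 1 by ring, Finset.sum_range_succ,
      Finset.sum_range_succ, ih]
    simp only [al]
    split_ifs <;> first | omega | simp_all

lemma bl_sum (t d : ℕ) : ∑ m ∈ Finset.range (2 * d + 1), bl t m = -1 := by
  induction d with
  | zero =>
    rw [show 2 * 0 + 1 = 0 + 1 by ring, Finset.sum_range_succ, Finset.sum_range_zero]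
    simp only [bl]
    split_ifs <;> first | omega | simp_all
  | succ d ih =>
    rw [show 2 * (d + 1) + 1 = (2 * d + 1) + 1 + 1 by ring, Finset.sum_range_succ,
      Finset.sum_range_succ, ih]
    simp only [bl]
    split_ifs <;> first | omega | simp_all

lemma sum_seq2 (j a b : ℕ) : ∑ i : Fin (j + 2), seq2 j a b i = a + b := by
  have h : ∑ i : Fin (j + 2), seq2 j a b i
      = ∑ i ∈ Finset.range (j + 2), (fun x => if x < j then 0 else if x = j then a else b) i :=
    Fin.sum_univ_eq_sum_range (fun x => if x < j then 0 else if x = j then a else b) (j + 2)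
  rw [h, Finset.sum_range_succ, Finset.sum_range_succ,
    Finset.sum_eq_zero (fun i hi => if_pos (Finset.mem_range.mp hi))]
  split_ifs <;> omega

lemma segSet_card (q : ℕ) : (segSet q).card = q := by
  unfold segSet
  split_ifs with h
  · rw [Finset.card_erase_of_mem (by rw [Finset.mem_Icc]; omega), Int.card_Icc]
    omega
  · rw [Int.card_Icc]; omega

lemma card_edge (j a b : ℕ) : Fintype.card (RTEdge (j + 2) (seq2 j a b)) = j + a + b + 2 := by
  have h : Fintype.card (RTEdge (j + 2) (seq2 j a b))
      = (j + 2) + ∑ i : Fin (j + 2), seq2 j a b i := by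
    simp [RTEdge, Fintype.card_sigma]
  rw [h, sum_seq2]; ring

lemma card_vertex (j a b : ℕ) : Fintype.card (RTVertex (j + 2) (seq2 j a b)) = j + a + b + 3 := by
  have h : Fintype.card (RTVertex (j + 2) (seq2 j a b))
      = Fintype.card (RTEdge (j + 2) (seq2 j a b)) + 1 := Fintype.card_option
  rw [h, card_edge]

lemma seq2_classify {j a b : ℕ} {i : Fin (j + 2)} (m : Fin (seq2 j a b i)) :
    ((i : ℕ) = j ∧ (m : ℕ) < a) ∨ ((i : ℕ) = j + 1 ∧ (m : ℕ) < b) := by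
  have hm := m.isLt
  have hi := i.isLt
  have key : (seq2 j a b i = 0 ∧ (i : ℕ) < j) ∨ ((i : ℕ) = j ∧ seq2 j a b i = a) ∨
      ((i : ℕ) = j + 1 ∧ seq2 j a b i = b) := by
    simp only [seq2]
    split_ifs <;> omega
  omega

lemma inr_ext {n : ℕ} {A : Fin n → ℕ} {i i' : Fin n} {m : Fin (A i)} {m' : Fin (A i')}
    (h1 : (i : ℕ) = (i' : ℕ)) (h2 : (m : ℕ) = (m' : ℕ)) :
    (Sum.inr ⟨i, m⟩ : RTEdge n A) = Sum.inr ⟨i', m'⟩ := by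
  have hi : i = i' := Fin.eq_of_val_eq h1
  subst hi
  have hm : m = m' := Fin.eq_of_val_eq h2
  rw [hm]

lemma bijOn_of_card {α : Type*} [Fintype α] [DecidableEq α] {f : α → ℤ} {S : Finset ℤ}
    (h1 : ∀ x, f x ∈ S) (h2 : Function.Injective f)
    (h3 : S.card = Fintype.card α) : Set.BijOn f Set.univ ↑S := by
  have himg : Finset.image f Finset.univ = S := by
    apply Finset.eq_of_subset_of_card_le
    · intro y hy
      obtain ⟨x, _, hx⟩ := Finset.mem_image.mp hy
      exact hx ▸ h1 x
    · rw [Finset.card_image_of_injective _ h2, Finset.card_univ, h3]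
  refine ⟨fun x _ => h1 x, fun x _ y _ h => h2 h, fun y hy => ?_⟩
  have : y ∈ Finset.image f Finset.univ := himg ▸ hy
  obtain ⟨x, _, hx⟩ := Finset.mem_image.mp this
  exact ⟨x, Set.mem_univ x, hx⟩

section Main

variable {j a b : ℕ}

set_option maxHeartbeats 2000000 in
lemma elabel_inj (hj : j % 2 = 0) (ha : a % 2 = 0) (ha2 : 2 ≤ a) (hb : b % 2 = 1) :
    Function.Injective (elabel j a b) := by
  intro x y h
  rcases x with i | ⟨i, m⟩ <;> rcases y with i' | ⟨i', m'⟩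
  · have hi := i.isLt; have hi' := i'.isLt
    have hv : (i : ℕ) = (i' : ℕ) := by
      simp only [elabel, el1, zl] at h
      split_ifs at h <;> omega
    exact congrArg Sum.inl (Fin.eq_of_val_eq hv)
  · exfalso
    have hi := i.isLt
    rcases seq2_classify m' with ⟨h1, h2⟩ | ⟨h1, h2⟩ <;>
    · simp only [elabel, el1, el2, zl, al, bl] at h
      split_ifs at h <;> omega
  · exfalso
    have hi' := i'.isLt
    rcases seq2_classify m with ⟨h1, h2⟩ | ⟨h1, h2⟩ <;>
    · simp only [elabel, el1, el2, zl, al, bl] at h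
      split_ifs at h <;> omega
  · obtain ⟨e1, e2⟩ : (i : ℕ) = (i' : ℕ) ∧ (m : ℕ) = (m' : ℕ) := by
      rcases seq2_classify m with ⟨h1, h2⟩ | ⟨h1, h2⟩ <;>
        rcases seq2_classify m' with ⟨h1', h2'⟩ | ⟨h1', h2'⟩ <;>
      · simp only [elabel, el2, al, bl] at h
        split_ifs at h <;> omega
    exact inr_ext e1 e2

set_option maxHeartbeats 2000000 in
lemma vlab_inj (hj : j % 2 = 0) (ha : a % 2 = 0) (ha2 : 2 ≤ a) (hb : b % 2 = 1) :
    Function.Injective (vlab j a b) := by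
  intro x y h
  rcases x with _ | (i | ⟨i, m⟩) <;> rcases y with _ | (i' | ⟨i', m'⟩)
  · rfl
  · exfalso
    have hi' := i'.isLt
    simp only [vlab, zl] at h
    split_ifs at h <;> omega
  · exfalso
    rcases seq2_classify m' with ⟨h1, h2⟩ | ⟨h1, h2⟩ <;>
    · simp only [vlab, el2, al, bl] at h
      split_ifs at h <;> omega
  · exfalso
    have hi := i.isLt
    simp only [vlab, zl] at h
    split_ifs at h <;> omega
  · have hi := i.isLt; have hi' := i'.isLt
    have hv : (i : ℕ) = (i' : ℕ) := by
      simp only [vlab, zl] at h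
      split_ifs at h <;> omega
    exact congrArg _ (congrArg Sum.inl (Fin.eq_of_val_eq hv))
  · exfalso
    have hi := i.isLt
    rcases seq2_classify m' with ⟨h1, h2⟩ | ⟨h1, h2⟩ <;>
    · simp only [vlab, el2, zl, al, bl] at h
      split_ifs at h <;> omega
  · exfalso
    rcases seq2_classify m with ⟨h1, h2⟩ | ⟨h1, h2⟩ <;>
    · simp only [vlab, el2, al, bl] at h
      split_ifs at h <;> omega
  · exfalso
    have hi' := i'.isLt
    rcases seq2_classify m with ⟨h1, h2⟩ | ⟨h1, h2⟩ <;>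
    · simp only [vlab, el2, zl, al, bl] at h
      split_ifs at h <;> omega
  · obtain ⟨e1, e2⟩ : (i : ℕ) = (i' : ℕ) ∧ (m : ℕ) = (m' : ℕ) := by
      rcases seq2_classify m with ⟨h1, h2⟩ | ⟨h1, h2⟩ <;>
        rcases seq2_classify m' with ⟨h1', h2'⟩ | ⟨h1', h2'⟩ <;>
      · simp only [vlab, el2, al, bl] at h
        split_ifs at h <;> omega
    exact congrArg some (inr_ext e1 e2)

lemma elabel_mem (hj : j % 2 = 0) (ha : a % 2 = 0) (ha2 : 2 ≤ a) (hb : b % 2 = 1)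
    (x : RTEdge (j + 2) (seq2 j a b)) : elabel j a b x ∈ segSet (j + a + b + 2) := by
  rw [segSet, if_neg (by omega), Finset.mem_Icc]
  rcases x with i | ⟨i, m⟩
  · have hi := i.isLt
    refine ⟨?_, ?_⟩ <;> (simp only [elabel, el1, zl]; split_ifs <;> omega)
  · rcases seq2_classify m with ⟨h1, h2⟩ | ⟨h1, h2⟩ <;>
    · refine ⟨?_, ?_⟩ <;> (simp only [elabel, el2, al, bl]; split_ifs <;> omega)

lemma vlab_mem (hj : j % 2 = 0) (ha : a % 2 = 0) (ha2 : 2 ≤ a) (hb : b % 2 = 1)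
    (x : RTVertex (j + 2) (seq2 j a b)) : vlab j a b x ∈ segSet (j + a + b + 3) := by
  rw [segSet, if_pos (by omega), Finset.mem_erase, Finset.mem_Icc]
  rcases x with _ | (i | ⟨i, m⟩)
  · refine ⟨?_, ?_, ?_⟩ <;> (simp only [vlab]; omega)
  · have hi := i.isLt
    refine ⟨?_, ?_, ?_⟩ <;> (simp only [vlab, zl]; split_ifs <;> omega)
  · rcases seq2_classify m with ⟨h1, h2⟩ | ⟨h1, h2⟩ <;>
    · refine ⟨?_, ?_, ?_⟩ <;> (simp only [vlab, el2, al, bl]; split_ifs <;> omega)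

lemma vsum_eq (hj : j % 2 = 0) (ha : a % 2 = 0) (ha2 : 2 ≤ a) (hb : b % 2 = 1) :
    vertexSum (seq2 j a b) (elabel j a b) = vlab j a b := by
  funext v
  rcases v with _ | (i | ⟨i, m⟩)
  · have h1 : vertexSum (seq2 j a b) (elabel j a b) none
        = ∑ i ∈ Finset.range (j + 2), el1 j a b i :=
      Fin.sum_univ_eq_sum_range (el1 j a b) (j + 2)
    have hz : ∑ i ∈ Finset.range j, el1 j a b i = 0 := by
      rw [Finset.sum_congr rfl (fun i hi => by
        show el1 j a b i = zl i
        simp only [el1]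
        rw [if_pos (Finset.mem_range.mp hi)])]
      obtain ⟨t, ht⟩ : ∃ t, j = 2 * t := ⟨j / 2, by omega⟩
      rw [ht]; exact zl_sum t
    rw [h1, Finset.sum_range_succ, Finset.sum_range_succ, hz]
    simp only [el1, vlab]
    split_ifs <;> omega
  · have h1 : vertexSum (seq2 j a b) (elabel j a b) (some (Sum.inl i))
        = el1 j a b i.val + ∑ m ∈ Finset.range (seq2 j a b i), el2 j a b i.val m := by
      show el1 j a b i.val + (∑ m : Fin (seq2 j a b i), el2 j a b i.val m.val) = _
      rw [Fin.sum_univ_eq_sum_range (fun m => el2 j a b i.val m) (seq2 j a b i)]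
    rw [h1]
    have hi2 := i.isLt
    rcases lt_trichotomy (i : ℕ) j with h | h | h
    · have hs : seq2 j a b i = 0 := by simp only [seq2]; rw [if_pos h]
      rw [hs, Finset.range_zero, Finset.sum_empty]
      simp only [el1, vlab]
      split_ifs <;> omega
    · have hs : seq2 j a b i = a := by
        simp only [seq2]; rw [if_neg (by omega), if_pos h]
      rw [hs]
      have hsum : ∑ m ∈ Finset.range a, el2 j a b i.val m
          = (((j + a + b + 1) / 2 : ℕ) : ℤ) + 1 := by
        rw [Finset.sum_congr rfl (fun m _ => by
          show el2 j a b i.val m = al ((j + a + b + 1) / 2) m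
          simp only [el2]; rw [if_pos h])]
        obtain ⟨c, hc⟩ : ∃ c, a = 2 * c + 2 := ⟨a / 2 - 1, by omega⟩
        rw [hc]; exact al_sum _ c
      rw [hsum]
      simp only [el1, vlab]
      split_ifs <;> omega
    · have hs : seq2 j a b i = b := by
        simp only [seq2]; rw [if_neg (by omega), if_neg (by omega)]
      rw [hs]
      have hsum : ∑ m ∈ Finset.range b, el2 j a b i.val m = -1 := by
        rw [Finset.sum_congr rfl (fun m _ => by
          show el2 j a b i.val m = bl (j / 2) m
          simp only [el2]; rw [if_neg (by omega)])]
        obtain ⟨d, hd⟩ : ∃ d, b = 2 * d + 1 := ⟨b / 2, by omega⟩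
        rw [hd]; exact bl_sum _ d
      rw [hsum]
      simp only [el1, vlab]
      split_ifs <;> omega
  · rfl

end Main

/-- For every even integer `j ≥ 0`, every even integer `a ≥ 2`, and every odd integer
`b ≥ 1`, the rooted tree `RT(0^j, a, b)` is super edge-graceful. -/
theorem stmt3 (j a b : ℕ) (hj : Even j) (ha : Even a) (ha2 : 2 ≤ a)
    (hb : Odd b) (hb1 : 1 ≤ b) : IsSEG (seq2 j a b) := by
  have hj' : j % 2 = 0 := Nat.even_iff.mp hj
  have ha' : a % 2 = 0 := Nat.even_iff.mp ha
  have hb' : b % 2 = 1 := Nat.odd_iff.mp hb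
  unfold IsSEG
  refine ⟨elabel j a b, ?_, ?_⟩
  · rw [sum_seq2, show j + 2 + (a + b) = j + a + b + 2 by ring]
    exact bijOn_of_card (elabel_mem hj' ha' ha2 hb') (elabel_inj hj' ha' ha2 hb')
      (by rw [segSet_card, card_edge])
  · rw [sum_seq2, show j + 2 + (a + b) + 1 = j + a + b + 3 by ring,
      vsum_eq hj' ha' ha2 hb']
    exact bijOn_of_card (vlab_mem hj' ha' ha2 hb') (vlab_inj hj' ha' ha2 hb')
      (by rw [segSet_card, card_vertex])
end

section
/- For every odd integer j ≥ 1 and all odd integers a, b with 3 ≤ a ≤ b, the rooted tree RT(0^j, a, b) is super edge-graceful. -/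
def Fe (j a b i : ℕ) : ℤ :=
  if i < j - 1 then (if i % 2 = 0 then (i : ℤ) / 2 + 2 else -((i : ℤ) / 2 + 2))
  else if i = j - 1 then 1
  else if i = j then 0
  else ((j : ℤ) + a + b + 1) / 2

/-- Edge label for the `m`-th leaf edge under child `i` of `RT(0^j, a, b)`. -/
def Ge (j a b i m : ℕ) : ℤ :=
  if i = j then
    if m < a - 3 then
      (if m % 2 = 0 then (m : ℤ) / 2 + ((j : ℤ) / 2 + 2)
       else -((m : ℤ) / 2 + ((j : ℤ) / 2 + 2)))
    else if m = a - 3 then -(((j : ℤ) + a + b + 1) / 2)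
    else if m = a - 2 then -(((j : ℤ) + a + b + 1) / 2 - 1)
    else ((j : ℤ) + a + b + 1) / 2 - 2
  else
    if m < b - 3 then
      (if m % 2 = 0 then (m : ℤ) / 2 + ((j : ℤ) / 2 + (a : ℤ) / 2 + 1)
       else -((m : ℤ) / 2 + ((j : ℤ) / 2 + (a : ℤ) / 2 + 1)))
    else if m = b - 3 then -1
    else if m = b - 2 then -(((j : ℤ) + a + b + 1) / 2 - 2)
    else ((j : ℤ) + a + b + 1) / 2 - 1

lemma pairsum (c : ℤ) (n : ℕ) :
    ∑ i ∈ Finset.range (2 * n),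
      (if i % 2 = 0 then (i : ℤ) / 2 + c else -((i : ℤ) / 2 + c)) = 0 := by
  induction n with
  | zero => simp
  | succ n ih =>
    have h2 : 2 * (n + 1) = 2 * n + 1 + 1 := by ring
    rw [h2, Finset.sum_range_succ, Finset.sum_range_succ, ih]
    have e1 : (2 * n) % 2 = 0 := by omega
    have e2 : (2 * n + 1) % 2 = 1 := by omega
    simp only [e1, e2, if_true, if_pos, if_neg (by omega : ¬(2 * n + 1) % 2 = 0)]
    push_cast
    omega

section
variable {j a b : ℕ}

lemma sumF (hj : j % 2 = 1) :
    ∑ i ∈ Finset.range (j + 2), Fe j a b i = ((j : ℤ) + a + b + 1) / 2 + 1 := by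
  have h2 : j + 2 = (j - 1) + 1 + 1 + 1 := by omega
  rw [h2, Finset.sum_range_succ, Finset.sum_range_succ, Finset.sum_range_succ]
  have h0 : ∑ i ∈ Finset.range (j - 1), Fe j a b i = 0 := by
    have hc : ∀ i ∈ Finset.range (j - 1), Fe j a b i =
        (if i % 2 = 0 then (i : ℤ) / 2 + 2 else -((i : ℤ) / 2 + 2)) := by
      intro i hi
      simp only [Finset.mem_range] at hi
      simp only [Fe, if_pos hi]
    rw [Finset.sum_congr rfl hc, show j - 1 = 2 * ((j - 1) / 2) by omega, pairsum]
  have e3 : Fe j a b (j - 1) = 1 := by simp only [Fe]; split_ifs <;> omega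
  have e2 : Fe j a b (j - 1 + 1) = 0 := by simp only [Fe]; split_ifs <;> omega
  have e1 : Fe j a b (j - 1 + 1 + 1) = ((j : ℤ) + a + b + 1) / 2 := by
    simp only [Fe]; split_ifs <;> omega
  rw [h0, e3, e2, e1]; ring

lemma sumGa (hj : j % 2 = 1) (ha : a % 2 = 1) (ha3 : 3 ≤ a) :
    ∑ m ∈ Finset.range a, Ge j a b j m = -(((j : ℤ) + a + b + 1) / 2) - 1 := by
  have h2 : Finset.range a = Finset.range ((a - 3) + 1 + 1 + 1) := by congr 1; omega
  rw [h2, Finset.sum_range_succ, Finset.sum_range_succ, Finset.sum_range_succ]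
  have h0 : ∑ m ∈ Finset.range (a - 3), Ge j a b j m = 0 := by
    have hc : ∀ m ∈ Finset.range (a - 3), Ge j a b j m =
        (if m % 2 = 0 then (m : ℤ) / 2 + ((j : ℤ) / 2 + 2)
         else -((m : ℤ) / 2 + ((j : ℤ) / 2 + 2))) := by
      intro m hm
      simp only [Finset.mem_range] at hm
      simp only [Ge]; split_ifs <;> omega
    rw [Finset.sum_congr rfl hc, show a - 3 = 2 * ((a - 3) / 2) by omega, pairsum]
  have e3 : Ge j a b j (a - 3) = -(((j : ℤ) + a + b + 1) / 2) := by
    simp only [Ge]; split_ifs <;> omega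
  have e2 : Ge j a b j (a - 3 + 1) = -(((j : ℤ) + a + b + 1) / 2 - 1) := by
    simp only [Ge]; split_ifs <;> omega
  have e1 : Ge j a b j (a - 3 + 1 + 1) = ((j : ℤ) + a + b + 1) / 2 - 2 := by
    simp only [Ge]; split_ifs <;> omega
  rw [h0, e3, e2, e1]; ring

lemma sumGb (hj : j % 2 = 1) (hb : b % 2 = 1) (hb3 : 3 ≤ b) :
    ∑ m ∈ Finset.range b, Ge j a b (j + 1) m = 0 := by
  have h2 : Finset.range b = Finset.range ((b - 3) + 1 + 1 + 1) := by congr 1; omega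
  rw [h2, Finset.sum_range_succ, Finset.sum_range_succ, Finset.sum_range_succ]
  have h0 : ∑ m ∈ Finset.range (b - 3), Ge j a b (j + 1) m = 0 := by
    have hc : ∀ m ∈ Finset.range (b - 3), Ge j a b (j + 1) m =
        (if m % 2 = 0 then (m : ℤ) / 2 + ((j : ℤ) / 2 + (a : ℤ) / 2 + 1)
         else -((m : ℤ) / 2 + ((j : ℤ) / 2 + (a : ℤ) / 2 + 1))) := by
      intro m hm
      simp only [Finset.mem_range] at hm
      simp only [Ge]; split_ifs <;> omega
    rw [Finset.sum_congr rfl hc, show b - 3 = 2 * ((b - 3) / 2) by omega, pairsum]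
  have e3 : Ge j a b (j + 1) (b - 3) = -1 := by simp only [Ge]; split_ifs <;> omega
  have e2 : Ge j a b (j + 1) (b - 3 + 1) = -(((j : ℤ) + a + b + 1) / 2 - 2) := by
    simp only [Ge]; split_ifs <;> omega
  have e1 : Ge j a b (j + 1) (b - 3 + 1 + 1) = ((j : ℤ) + a + b + 1) / 2 - 1 := by
    simp only [Ge]; split_ifs <;> omega
  rw [h0, e3, e2, e1]; ring

end

section
variable {j a b : ℕ}

lemma Finj (hj : j % 2 = 1) (hj1 : 1 ≤ j) (ha : a % 2 = 1) (hb : b % 2 = 1)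
    (ha3 : 3 ≤ a) (hab : a ≤ b) :
    ∀ i1 i2, i1 < j + 2 → i2 < j + 2 → Fe j a b i1 = Fe j a b i2 → i1 = i2 := by
  intro i1 i2 h1 h2 h
  simp only [Fe] at h
  split_ifs at h <;> omega

lemma Gainj (hj : j % 2 = 1) (hj1 : 1 ≤ j) (ha : a % 2 = 1) (hb : b % 2 = 1)
    (ha3 : 3 ≤ a) (hab : a ≤ b) :
    ∀ m1 m2, m1 < a → m2 < a → Ge j a b j m1 = Ge j a b j m2 → m1 = m2 := by
  intro m1 m2 h1 h2 h
  simp only [Ge] at h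
  split_ifs at h <;> omega

lemma Gbinj (hj : j % 2 = 1) (hj1 : 1 ≤ j) (ha : a % 2 = 1) (hb : b % 2 = 1)
    (ha3 : 3 ≤ a) (hab : a ≤ b) :
    ∀ m1 m2, m1 < b → m2 < b → Ge j a b (j + 1) m1 = Ge j a b (j + 1) m2 → m1 = m2 := by
  intro m1 m2 h1 h2 h
  simp only [Ge] at h
  split_ifs at h <;> omega

lemma FGa (hj : j % 2 = 1) (hj1 : 1 ≤ j) (ha : a % 2 = 1) (hb : b % 2 = 1)
    (ha3 : 3 ≤ a) (hab : a ≤ b) :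
    ∀ i m, i < j + 2 → m < a → Fe j a b i ≠ Ge j a b j m := by
  intro i m h1 h2 h
  simp only [Fe, Ge] at h
  split_ifs at h <;> omega

lemma FGb (hj : j % 2 = 1) (hj1 : 1 ≤ j) (ha : a % 2 = 1) (hb : b % 2 = 1)
    (ha3 : 3 ≤ a) (hab : a ≤ b) :
    ∀ i m, i < j + 2 → m < b → Fe j a b i ≠ Ge j a b (j + 1) m := by
  intro i m h1 h2 h
  simp only [Fe, Ge] at h
  split_ifs at h <;> omega

lemma GaGb (hj : j % 2 = 1) (hj1 : 1 ≤ j) (ha : a % 2 = 1) (hb : b % 2 = 1)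
    (ha3 : 3 ≤ a) (hab : a ≤ b) :
    ∀ m1 m2, m1 < a → m2 < b → Ge j a b j m1 ≠ Ge j a b (j + 1) m2 := by
  intro m1 m2 h1 h2 h
  simp only [Ge] at h
  split_ifs at h <;> omega

lemma Fmem (hj : j % 2 = 1) (hj1 : 1 ≤ j) (ha : a % 2 = 1) (hb : b % 2 = 1)
    (ha3 : 3 ≤ a) (hab : a ≤ b) :
    ∀ i, i < j + 2 → -(((j : ℤ) + a + b + 1) / 2) ≤ Fe j a b i ∧
      Fe j a b i ≤ ((j : ℤ) + a + b + 1) / 2 := by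
  intro i h1
  simp only [Fe]
  split_ifs <;> omega

lemma Fsmall (hj : j % 2 = 1) (hj1 : 1 ≤ j) (ha : a % 2 = 1) (hb : b % 2 = 1)
    (ha3 : 3 ≤ a) (hab : a ≤ b) :
    ∀ i, i < j → Fe j a b i ≠ 0 ∧ -(((j : ℤ) + a + b + 1) / 2) + 1 ≤ Fe j a b i ∧
      Fe j a b i ≤ ((j : ℤ) + a + b + 1) / 2 - 1 := by
  intro i h1
  simp only [Fe]
  split_ifs <;> omega

lemma Gamem (hj : j % 2 = 1) (hj1 : 1 ≤ j) (ha : a % 2 = 1) (hb : b % 2 = 1)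
    (ha3 : 3 ≤ a) (hab : a ≤ b) :
    ∀ m, m < a → Ge j a b j m ≠ 0 ∧ -(((j : ℤ) + a + b + 1) / 2) ≤ Ge j a b j m ∧
      Ge j a b j m ≤ ((j : ℤ) + a + b + 1) / 2 - 2 := by
  intro m h1
  simp only [Ge]
  split_ifs <;> omega

lemma Gbmem (hj : j % 2 = 1) (hj1 : 1 ≤ j) (ha : a % 2 = 1) (hb : b % 2 = 1)
    (ha3 : 3 ≤ a) (hab : a ≤ b) :
    ∀ m, m < b → Ge j a b (j + 1) m ≠ 0 ∧
      -(((j : ℤ) + a + b + 1) / 2) + 2 ≤ Ge j a b (j + 1) m ∧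
      Ge j a b (j + 1) m ≤ ((j : ℤ) + a + b + 1) / 2 - 1 := by
  intro m h1
  simp only [Ge]
  split_ifs <;> omega

end

lemma bijOn_of_inj {α : Type*} [Fintype α] {f : α → ℤ} {T : Finset ℤ}
    (hinj : Function.Injective f) (hmem : ∀ x, f x ∈ T)
    (hcard : T.card ≤ Fintype.card α) : Set.BijOn f Set.univ ↑T := by
  have himg : Finset.image f Finset.univ = T := by
    apply Finset.eq_of_subset_of_card_le
    · intro y hy
      obtain ⟨x, _, rfl⟩ := Finset.mem_image.mp hy
      exact hmem x
    · rwa [Finset.card_image_of_injective _ hinj, Finset.card_univ]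
  refine ⟨fun x _ => hmem x, fun x _ y _ h => hinj h, fun y hy => ?_⟩
  have hy' : y ∈ Finset.image f Finset.univ := by
    rw [himg]; exact Finset.mem_coe.mp hy
  obtain ⟨x, _, hx⟩ := Finset.mem_image.mp hy'
  exact ⟨x, Set.mem_univ x, hx⟩

/-- The edge labeling of `RT(0^j, a, b)`. -/
def fE (j a b : ℕ) : RTEdge (j + 2) (seq2 j a b) → ℤ
  | .inl i => Fe j a b i.1
  | .inr ⟨i, m⟩ => Ge j a b i.1 m.1

/-- Closed form of the induced vertex labeling. -/
def Vt (j a b : ℕ) : RTVertex (j + 2) (seq2 j a b) → ℤ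
  | none => ((j : ℤ) + a + b + 1) / 2 + 1
  | some (.inl i) =>
      if (i : ℕ) < j then Fe j a b i.1
      else if (i : ℕ) = j then -(((j : ℤ) + a + b + 1) / 2) - 1
      else ((j : ℤ) + a + b + 1) / 2
  | some (.inr ⟨i, m⟩) => Ge j a b i.1 m.1

lemma leaf_idx {j a b : ℕ} (i : Fin (j + 2)) (m : Fin (seq2 j a b i)) :
    ((i : ℕ) = j ∧ (m : ℕ) < a) ∨ ((i : ℕ) = j + 1 ∧ (m : ℕ) < b) := by
  have hm := m.2
  have hi := i.2
  simp only [seq2] at hm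
  by_cases h1 : (i : ℕ) < j <;> by_cases h2 : (i : ℕ) = j <;>
    simp only [h1, h2, lt_self_iff_false, if_true, if_false, ite_true, ite_false] at hm <;>
    omega

section
variable {j a b : ℕ}

lemma hVt (hj : j % 2 = 1) (hj1 : 1 ≤ j) (ha : a % 2 = 1) (hb : b % 2 = 1)
    (ha3 : 3 ≤ a) (hab : a ≤ b) :
    vertexSum (seq2 j a b) (fE j a b) = Vt j a b := by
  have hb3 : 3 ≤ b := le_trans ha3 hab
  funext v
  rcases v with _ | (i | ⟨i, m⟩)
  · simp only [vertexSum, Vt, fE]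
    rw [Fin.sum_univ_eq_sum_range (Fe j a b) (j + 2)]
    exact sumF hj
  · simp only [vertexSum, Vt, fE]
    rw [Fin.sum_univ_eq_sum_range (fun m => Ge j a b i.1 m) (seq2 j a b i)]
    have hi := i.2
    rcases (by omega : (i : ℕ) < j ∨ (i : ℕ) = j ∨ (i : ℕ) = j + 1) with h1 | h1 | h1
    · have hs : seq2 j a b i = 0 := by simp only [seq2, if_pos h1]
      rw [hs, if_pos h1]
      simp
    · have hs : seq2 j a b i = a := by
        simp only [seq2, h1, lt_self_iff_false, if_false, if_true, ite_true, ite_false]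
      have hFj : Fe j a b j = 0 := by simp only [Fe]; split_ifs <;> omega
      rw [hs, h1, sumGa hj ha ha3, hFj, if_neg (by omega), if_pos rfl]
      ring
    · have hs : seq2 j a b i = b := by
        simp only [seq2, h1]; split_ifs <;> omega
      have hFj : Fe j a b (j + 1) = ((j : ℤ) + a + b + 1) / 2 := by
        simp only [Fe]; split_ifs <;> omega
      rw [hs, h1, sumGb hj hb hb3, hFj, if_neg (by omega), if_neg (by omega)]
      ring
  · simp only [vertexSum, Vt, fE]

end

/-- For every odd integer `j ≥ 1` and all odd integers `a, b` with `3 ≤ a ≤ b`, the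
rooted tree `RT(0^j, a, b)` is super edge-graceful. -/
theorem stmt7 (j a b : ℕ) (hj : Odd j) (hj1 : 1 ≤ j) (ha : Odd a) (hb : Odd b)
    (ha3 : 3 ≤ a) (hab : a ≤ b) : IsSEG (seq2 j a b) := by
  have hj' : j % 2 = 1 := Nat.odd_iff.mp hj
  have ha' : a % 2 = 1 := Nat.odd_iff.mp ha
  have hb' : b % 2 = 1 := Nat.odd_iff.mp hb
  have hb3 : 3 ≤ b := le_trans ha3 hab
  have hsum : ∑ i, seq2 j a b i = a + b := by
    rw [show (seq2 j a b) = (fun i : Fin (j + 2) =>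
        (fun k : ℕ => if k < j then 0 else if k = j then a else b) (i : ℕ)) from rfl,
      Fin.sum_univ_eq_sum_range (fun k : ℕ => if k < j then 0 else if k = j then a else b)
        (j + 2)]
    rw [show Finset.range (j + 2) = Finset.range (j + 1 + 1) from rfl,
      Finset.sum_range_succ, Finset.sum_range_succ]
    have h0 : ∑ k ∈ Finset.range j,
        (if k < j then 0 else if k = j then a else b) = 0 := by
      apply Finset.sum_eq_zero
      intro k hk
      rw [if_pos (Finset.mem_range.mp hk)]
    rw [h0, if_neg (by omega), if_pos rfl, if_neg (by omega), if_neg (by omega)]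
    omega
  refine ⟨fE j a b, ?_, ?_⟩
  · -- edge labeling bijection
    rw [hsum]
    have hseg : segSet (j + 2 + (a + b)) =
        Finset.Icc (-(((j + 2 + (a + b)) / 2 : ℕ) : ℤ)) (((j + 2 + (a + b)) / 2 : ℕ) : ℤ) := by
      rw [segSet, if_neg (by omega)]
    have hc : (((j + 2 + (a + b)) / 2 : ℕ) : ℤ) = ((j : ℤ) + a + b + 1) / 2 := by omega
    apply bijOn_of_inj
    · intro e1 e2 h
      rcases e1 with i1 | ⟨i1, m1⟩ <;> rcases e2 with i2 | ⟨i2, m2⟩ <;> simp only [fE] at h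
      · exact congrArg Sum.inl (Fin.ext (Finj hj' hj1 ha' hb' ha3 hab i1.1 i2.1 i1.2 i2.2 h))
      · rcases leaf_idx i2 m2 with ⟨hi2, hm2⟩ | ⟨hi2, hm2⟩ <;> rw [hi2] at h
        · exact absurd h (FGa hj' hj1 ha' hb' ha3 hab i1.1 m2.1 i1.2 hm2)
        · exact absurd h (FGb hj' hj1 ha' hb' ha3 hab i1.1 m2.1 i1.2 hm2)
      · rcases leaf_idx i1 m1 with ⟨hi1, hm1⟩ | ⟨hi1, hm1⟩ <;> rw [hi1] at h
        · exact absurd h.symm (FGa hj' hj1 ha' hb' ha3 hab i2.1 m1.1 i2.2 hm1)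
        · exact absurd h.symm (FGb hj' hj1 ha' hb' ha3 hab i2.1 m1.1 i2.2 hm1)
      · rcases leaf_idx i1 m1 with ⟨hi1, hm1⟩ | ⟨hi1, hm1⟩ <;>
          rcases leaf_idx i2 m2 with ⟨hi2, hm2⟩ | ⟨hi2, hm2⟩ <;> rw [hi1, hi2] at h
        · have hii : i1 = i2 := Fin.ext (by omega)
          subst hii
          have hmm : m1 = m2 :=
            Fin.ext (Gainj hj' hj1 ha' hb' ha3 hab m1.1 m2.1 hm1 hm2 h)
          rw [hmm]
        · exact absurd h (GaGb hj' hj1 ha' hb' ha3 hab m1.1 m2.1 hm1 hm2)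
        · exact absurd h.symm (GaGb hj' hj1 ha' hb' ha3 hab m2.1 m1.1 hm2 hm1)
        · have hii : i1 = i2 := Fin.ext (by omega)
          subst hii
          have hmm : m1 = m2 :=
            Fin.ext (Gbinj hj' hj1 ha' hb' ha3 hab m1.1 m2.1 hm1 hm2 h)
          rw [hmm]
    · intro e
      rw [hseg, hc, Finset.mem_Icc]
      rcases e with i | ⟨i, m⟩
      · exact Fmem hj' hj1 ha' hb' ha3 hab i.1 i.2
      · rcases leaf_idx i m with ⟨hi, hm⟩ | ⟨hi, hm⟩ <;> simp only [fE, hi]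
        · obtain ⟨_, h2, h3⟩ := Gamem hj' hj1 ha' hb' ha3 hab m.1 hm
          exact ⟨h2, le_trans h3 (by omega)⟩
        · obtain ⟨_, h2, h3⟩ := Gbmem hj' hj1 ha' hb' ha3 hab m.1 hm
          exact ⟨le_trans (by omega) h2, le_trans h3 (by omega)⟩
    · have hTcard : (segSet (j + 2 + (a + b))).card = j + 2 + (a + b) := by
        rw [hseg, Int.card_Icc]
        omega
      have hEcard : Fintype.card (RTEdge (j + 2) (seq2 j a b)) = j + 2 + (a + b) := by
        simp [RTEdge, Fintype.card_sum, Fintype.card_sigma, hsum]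
      omega
  · -- vertex labeling bijection
    rw [hsum, hVt hj' hj1 ha' hb' ha3 hab]
    have hseg : segSet (j + 2 + (a + b) + 1) =
        (Finset.Icc (-(((j + 2 + (a + b) + 1) / 2 : ℕ) : ℤ))
          (((j + 2 + (a + b) + 1) / 2 : ℕ) : ℤ)).erase 0 := by
      rw [segSet, if_pos (by omega)]
    have hc : (((j + 2 + (a + b) + 1) / 2 : ℕ) : ℤ) = ((j : ℤ) + a + b + 1) / 2 + 1 := by
      omega
    have hS4 : 4 ≤ ((j : ℤ) + a + b + 1) / 2 := by omega
    apply bijOn_of_inj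
    · intro v1 v2 h
      rcases v1 with _ | (i1 | ⟨i1, m1⟩) <;> rcases v2 with _ | (i2 | ⟨i2, m2⟩) <;>
        simp only [Vt] at h
      · rfl
      · exfalso
        split_ifs at h with h1 h2
        · obtain ⟨_, hl, hr⟩ := Fsmall hj' hj1 ha' hb' ha3 hab i2.1 h1
          linarith
        · linarith
        · linarith
      · exfalso
        rcases leaf_idx i2 m2 with ⟨hi2, hm2⟩ | ⟨hi2, hm2⟩ <;> rw [hi2] at h
        · obtain ⟨_, hl, hr⟩ := Gamem hj' hj1 ha' hb' ha3 hab m2.1 hm2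
          linarith
        · obtain ⟨_, hl, hr⟩ := Gbmem hj' hj1 ha' hb' ha3 hab m2.1 hm2
          linarith
      · exfalso
        split_ifs at h with h1 h2
        · obtain ⟨_, hl, hr⟩ := Fsmall hj' hj1 ha' hb' ha3 hab i1.1 h1
          linarith
        · linarith
        · linarith
      · have hi1 := i1.2
        have hi2 := i2.2
        split_ifs at h with h1 h2 h3 h4 h5 h6 h7 h8
        · exact congrArg _ (congrArg Sum.inl
            (Fin.ext (Finj hj' hj1 ha' hb' ha3 hab i1.1 i2.1 (by omega) (by omega) h)))
        · exfalso
          obtain ⟨_, hl, hr⟩ := Fsmall hj' hj1 ha' hb' ha3 hab i1.1 h1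
          linarith
        · exfalso
          obtain ⟨_, hl, hr⟩ := Fsmall hj' hj1 ha' hb' ha3 hab i1.1 h1
          linarith
        · exfalso
          obtain ⟨_, hl, hr⟩ := Fsmall hj' hj1 ha' hb' ha3 hab i2.1 h5
          linarith
        · exact congrArg _ (congrArg Sum.inl (Fin.ext (by omega)))
        · exfalso; linarith
        · exfalso
          obtain ⟨_, hl, hr⟩ := Fsmall hj' hj1 ha' hb' ha3 hab i2.1 h7
          linarith
        · exfalso; linarith
        · exact congrArg _ (congrArg Sum.inl (Fin.ext (by omega)))
      · exfalso
        rcases leaf_idx i2 m2 with ⟨hi2, hm2⟩ | ⟨hi2, hm2⟩ <;> rw [hi2] at h <;>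
          split_ifs at h with h1 h2
        · exact FGa hj' hj1 ha' hb' ha3 hab i1.1 m2.1 (by omega) hm2 h
        · obtain ⟨_, hl, hr⟩ := Gamem hj' hj1 ha' hb' ha3 hab m2.1 hm2
          linarith
        · obtain ⟨_, hl, hr⟩ := Gamem hj' hj1 ha' hb' ha3 hab m2.1 hm2
          linarith
        · exact FGb hj' hj1 ha' hb' ha3 hab i1.1 m2.1 (by omega) hm2 h
        · obtain ⟨_, hl, hr⟩ := Gbmem hj' hj1 ha' hb' ha3 hab m2.1 hm2
          linarith
        · obtain ⟨_, hl, hr⟩ := Gbmem hj' hj1 ha' hb' ha3 hab m2.1 hm2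
          linarith
      · exfalso
        rcases leaf_idx i1 m1 with ⟨hi1, hm1⟩ | ⟨hi1, hm1⟩ <;> rw [hi1] at h
        · obtain ⟨_, hl, hr⟩ := Gamem hj' hj1 ha' hb' ha3 hab m1.1 hm1
          linarith
        · obtain ⟨_, hl, hr⟩ := Gbmem hj' hj1 ha' hb' ha3 hab m1.1 hm1
          linarith
      · exfalso
        rcases leaf_idx i1 m1 with ⟨hi1, hm1⟩ | ⟨hi1, hm1⟩ <;> rw [hi1] at h <;>
          split_ifs at h with h1 h2
        · exact FGa hj' hj1 ha' hb' ha3 hab i2.1 m1.1 (by omega) hm1 h.symm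
        · obtain ⟨_, hl, hr⟩ := Gamem hj' hj1 ha' hb' ha3 hab m1.1 hm1
          linarith
        · obtain ⟨_, hl, hr⟩ := Gamem hj' hj1 ha' hb' ha3 hab m1.1 hm1
          linarith
        · exact FGb hj' hj1 ha' hb' ha3 hab i2.1 m1.1 (by omega) hm1 h.symm
        · obtain ⟨_, hl, hr⟩ := Gbmem hj' hj1 ha' hb' ha3 hab m1.1 hm1
          linarith
        · obtain ⟨_, hl, hr⟩ := Gbmem hj' hj1 ha' hb' ha3 hab m1.1 hm1
          linarith
      · rcases leaf_idx i1 m1 with ⟨hi1, hm1⟩ | ⟨hi1, hm1⟩ <;>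
          rcases leaf_idx i2 m2 with ⟨hi2, hm2⟩ | ⟨hi2, hm2⟩ <;> rw [hi1, hi2] at h
        · have hii : i1 = i2 := Fin.ext (by omega)
          subst hii
          have hmm : m1 = m2 :=
            Fin.ext (Gainj hj' hj1 ha' hb' ha3 hab m1.1 m2.1 hm1 hm2 h)
          rw [hmm]
        · exact absurd h (GaGb hj' hj1 ha' hb' ha3 hab m1.1 m2.1 hm1 hm2)
        · exact absurd h.symm (GaGb hj' hj1 ha' hb' ha3 hab m2.1 m1.1 hm2 hm1)
        · have hii : i1 = i2 := Fin.ext (by omega)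
          subst hii
          have hmm : m1 = m2 :=
            Fin.ext (Gbinj hj' hj1 ha' hb' ha3 hab m1.1 m2.1 hm1 hm2 h)
          rw [hmm]
    · intro v
      rw [hseg, hc, Finset.mem_erase, Finset.mem_Icc]
      rcases v with _ | (i | ⟨i, m⟩) <;> simp only [Vt]
      · constructor
        · omega
        · constructor <;> omega
      · split_ifs with h1 h2
        · obtain ⟨hne, hl, hr⟩ := Fsmall hj' hj1 ha' hb' ha3 hab i.1 h1
          exact ⟨hne, by linarith, by linarith⟩
        · refine ⟨by omega, by omega, by omega⟩
        · refine ⟨by omega, by omega, by omega⟩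
      · rcases leaf_idx i m with ⟨hi, hm⟩ | ⟨hi, hm⟩ <;> rw [hi]
        · obtain ⟨hne, hl, hr⟩ := Gamem hj' hj1 ha' hb' ha3 hab m.1 hm
          exact ⟨hne, by linarith, by linarith⟩
        · obtain ⟨hne, hl, hr⟩ := Gbmem hj' hj1 ha' hb' ha3 hab m.1 hm
          exact ⟨hne, by linarith, by linarith⟩
    · have hTcard : (segSet (j + 2 + (a + b) + 1)).card = j + 2 + (a + b) + 1 := by
        rw [hseg, Finset.card_erase_of_mem (by rw [Finset.mem_Icc]; omega), Int.card_Icc]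
        omega
      have hVcard : Fintype.card (RTVertex (j + 2) (seq2 j a b)) = j + 2 + (a + b) + 1 := by
        simp [RTVertex, RTEdge, Fintype.card_option, Fintype.card_sum, Fintype.card_sigma, hsum]
      omega
end
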